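/- Let α > 0, let θ > max(α − 1, 0), and let k ∈ ℕ. Then there exist a constant C > 0 and an integer N₀ ∈ ℕ (depending on α, θ, k) such that для every N ≥ N₀, every η ∈ [N + (k−1)N^{−θ}, N + 2(k−1)N^{−θ}], and every ζ ∈ [N^{−θ}, 2N^{−θ}], the resonance function satisfies | (ζ + η)^α − ζ^α − η^α | ≤ C. -/
import Mathlib

lemma mvt_rpow_aux {α x y : ℝ} (hα : 0 < α) (hy : 0 < y) (hxy : y < x) :
    ∃ c ∈ Set.Ioo y x, x ^ α - y ^ α = α * c ^ (α - 1) * (x - y) := by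
  obtain ⟨c, hc, hc'⟩ := exists_hasDerivAt_eq_slope (fun t : ℝ => t ^ α)
    (fun t : ℝ => α * t ^ (α - 1)) hxy
    ((Real.continuous_rpow_const hα.le).continuousOn)
    (fun t ht => Real.hasDerivAt_rpow_const (Or.inl (by nlinarith [ht.1] : t ≠ 0)))
  refine ⟨c, hc, ?_⟩
  rw [hc', div_mul_cancel₀]
  linarith

/-- Boundedness of the resonance function: for `θ > max(α−1, 0)` there are `C > 0` and `N₀`
such that for all `N ≥ N₀`, `η ∈ [N+(k−1)N^{−θ}, N+2(k−1)N^{−θ}]` and `ζ ∈ [N^{−θ}, 2N^{−θ}]`,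
`|(ζ+η)^α − ζ^α − η^α| ≤ C`. -/
theorem resonance_bound (α θ : ℝ) (hα : 0 < α) (hθ : max (α - 1) 0 < θ) (k : ℕ) (hk : 1 ≤ k) :
    ∃ C : ℝ, 0 < C ∧ ∃ N₀ : ℕ,
      ∀ N : ℕ, N₀ ≤ N →
        ∀ η ∈ Set.Icc ((N : ℝ) + ((k : ℝ) - 1) * (N : ℝ) ^ (-θ))
            ((N : ℝ) + 2 * ((k : ℝ) - 1) * (N : ℝ) ^ (-θ)),
          ∀ ζ ∈ Set.Icc ((N : ℝ) ^ (-θ)) (2 * (N : ℝ) ^ (-θ)),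
            |(ζ + η) ^ α - ζ ^ α - η ^ α| ≤ C := by
  have hθ0 : 0 < θ := lt_of_le_of_lt (le_max_right _ _) hθ
  have hθα : α - 1 < θ := lt_of_le_of_lt (le_max_left _ _) hθ
  have h2α : (1 : ℝ) ≤ 2 ^ α := Real.one_le_rpow one_le_two hα.le
  have h2αpos : (0 : ℝ) < 2 ^ α := by positivity
  refine ⟨(α + 2) * 2 ^ α, by positivity, 2 * k, ?_⟩
  intro N hN η hη ζ hζ
  have hk1 : (1 : ℝ) ≤ (k : ℝ) := by exact_mod_cast hk
  have hN2k : (2 * k : ℝ) ≤ (N : ℝ) := by exact_mod_cast hN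
  have hN1 : (1 : ℝ) ≤ (N : ℝ) := by linarith
  have hNpos : (0 : ℝ) < (N : ℝ) := by linarith
  have hpow : (N : ℝ) ^ (-θ) ≤ 1 :=
    Real.rpow_le_one_of_one_le_of_nonpos hN1 (by linarith)
  have hpowpos : (0 : ℝ) < (N : ℝ) ^ (-θ) := Real.rpow_pos_of_pos hNpos _
  have hζpos : 0 < ζ := lt_of_lt_of_le hpowpos hζ.1
  have hζ2 : ζ ≤ 2 := le_trans hζ.2 (by linarith)
  have hη1 : (1 : ℝ) ≤ η := le_trans (by nlinarith [hη.1]) (le_refl η)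
  have hsum2N : ζ + η ≤ 2 * N := by
    have := hη.2
    have := hζ.2
    nlinarith
  -- bound ζ ^ α ≤ 2 ^ α
  have hζα : ζ ^ α ≤ 2 ^ α := Real.rpow_le_rpow hζpos.le hζ2 hα.le
  have hζα0 : 0 ≤ ζ ^ α := Real.rpow_nonneg hζpos.le _
  -- bound A := (ζ+η)^α - η^α
  obtain ⟨c, hc, hce⟩ := mvt_rpow_aux hα (by linarith : (0:ℝ) < η)
    (by linarith : η < ζ + η)
  have hc1 : (1 : ℝ) ≤ c := le_trans hη1 hc.1.le
  have hA0 : 0 ≤ (ζ + η) ^ α - η ^ α := by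
    have := Real.rpow_le_rpow (by linarith : (0:ℝ) ≤ η) (by linarith : η ≤ ζ + η) hα.le
    linarith
  have hAle : (ζ + η) ^ α - η ^ α ≤ (α + 1) * 2 ^ α := by
    rw [hce]
    rcases le_or_gt 1 α with h1 | h1
    · -- c^(α-1) ≤ (2N)^(α-1)
      have hcle : c ^ (α - 1) ≤ (2 * N) ^ (α - 1) :=
        Real.rpow_le_rpow (by linarith) (le_trans hc.2.le hsum2N) (by linarith)
      have h2N : (2 * (N : ℝ)) ^ (α - 1) = 2 ^ (α - 1) * (N : ℝ) ^ (α - 1) :=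
        Real.mul_rpow (by norm_num) hNpos.le
      have hNe : (N : ℝ) ^ (α - 1) * (N : ℝ) ^ (-θ) = (N : ℝ) ^ (α - 1 + -θ) :=
        (Real.rpow_add hNpos _ _).symm
      have hNle1 : (N : ℝ) ^ (α - 1 + -θ) ≤ 1 :=
        Real.rpow_le_one_of_one_le_of_nonpos hN1 (by linarith)
      have h2e : (2 : ℝ) ^ (α - 1) * 2 = 2 ^ α := by
        rw [show (2:ℝ) ^ α = 2 ^ (α - 1 + 1) by ring_nf, Real.rpow_add (by norm_num),
          Real.rpow_one]
      have hcpos : (0:ℝ) ≤ c ^ (α - 1) := Real.rpow_nonneg (by linarith) _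
      have hζle : ζ + η - η ≤ 2 * (N : ℝ) ^ (-θ) := by linarith [hζ.2]
      calc α * c ^ (α - 1) * (ζ + η - η)
            ≤ α * (2 ^ (α - 1) * (N : ℝ) ^ (α - 1)) * (2 * (N : ℝ) ^ (-θ)) := by
              have h1' : (0:ℝ) ≤ 2 ^ (α - 1) * (N : ℝ) ^ (α - 1) := by positivity
              have : α * c ^ (α - 1) ≤ α * (2 ^ (α - 1) * (N : ℝ) ^ (α - 1)) := by
                rw [← h2N]; exact mul_le_mul_of_nonneg_left hcle hα.le
              have hz0 : (0:ℝ) ≤ ζ + η - η := by linarith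
              nlinarith [mul_le_mul this hζle hz0 (by positivity : (0:ℝ) ≤ α * (2 ^ (α - 1) * (N : ℝ) ^ (α - 1)))]
        _ = α * 2 ^ α * ((N : ℝ) ^ (α - 1 + -θ)) := by
              rw [← hNe, ← h2e]; ring
        _ ≤ α * 2 ^ α := mul_le_of_le_one_right (by positivity) hNle1
        _ ≤ (α + 1) * 2 ^ α := by linarith
    · -- α < 1 : c^(α-1) ≤ 1
      have hcle : c ^ (α - 1) ≤ 1 :=
        Real.rpow_le_one_of_one_le_of_nonpos hc1 (by linarith)
      have hcpos : (0:ℝ) ≤ c ^ (α - 1) := Real.rpow_nonneg (by linarith) _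
      have hζle : ζ + η - η ≤ 2 := by linarith
      have hz0 : (0:ℝ) ≤ ζ + η - η := by linarith
      have h1' : α * c ^ (α - 1) ≤ α * 1 := mul_le_mul_of_nonneg_left hcle hα.le
      have h2' := mul_le_mul h1' hζle hz0 (by positivity : (0:ℝ) ≤ α * 1)
      have h3' : (α + 1) * 1 ≤ (α + 1) * 2 ^ α :=
        mul_le_mul_of_nonneg_left h2α (by linarith)
      linarith
  have habs : |(ζ + η) ^ α - ζ ^ α - η ^ α| ≤ ((ζ + η) ^ α - η ^ α) + ζ ^ α := by
    rw [abs_le]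
    constructor <;> nlinarith
  calc |(ζ + η) ^ α - ζ ^ α - η ^ α| ≤ ((ζ + η) ^ α - η ^ α) + ζ ^ α := habs
    _ ≤ (α + 1) * 2 ^ α + 2 ^ α := by linarith
    _ = (α + 2) * 2 ^ α := by ring
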